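/- Let σ : I^{n+1} → G be a singular (n+1)-cube in which two adjacent faces f_i^a σ and f_j^{-a} σ (i < j, opposite signs) are both supported by the same rigid n-cube, with f_i^a f_j^a σ = f_i^{-a} f_j^{-a} σ, so that σ ∘ T_i = σ ∘ T_i ∘ T_{i,j}. Then f_i^a σ = (f_j^{-a} σ) ∘ T_i ∘ T_{i,i+1} ∘ T_{i+1,i+2} ∘ ⋯ ∘ T_{j-2,j-1}. -/

import Mathlib

/-- The discrete `n`-cube graph on `{0,1}^n`: two vertices are adjacent iff they
differ in exactly one coordinate. -/
def Cube (n : ℕ) : SimpleGraph (Fin n → Bool) where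
  Adj x y := ∃! i, x i ≠ y i
  symm := by
    constructor
    rintro x y ⟨i, hi, hu⟩
    exact ⟨i, hi.symm, fun j hj => hu j hj.symm⟩
  loopless := by
    constructor
    rintro x ⟨i, hi, -⟩
    exact hi rfl

/-- A graph map sends each edge to an edge or to a vertex. -/
def IsGraphMap {V W : Type*} (G : SimpleGraph V) (H : SimpleGraph W) (f : V → W) : Prop :=
  ∀ ⦃u v⦄, G.Adj u v → H.Adj (f u) (f v) ∨ f u = f v

/-- The face of a singular cube obtained by fixing the `i`-th coordinate to `b`
(`b = false` gives the front face `f_i^-`, `b = true` the back face `f_i^+`). -/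
def face {V : Type*} {n : ℕ} (i : Fin (n + 1)) (b : Bool)
    (σ : (Fin (n + 1) → Bool) → V) : (Fin n → Bool) → V :=
  fun t => σ (i.insertNth b t)

/-- The reflection `T_i` of the discrete cube, flipping the `i`-th coordinate. -/
def reflT {n : ℕ} (i : Fin n) (t : Fin n → Bool) : Fin n → Bool :=
  Function.update t i (!t i)

/-- The transposition `T_{i,j}` of the discrete cube, swapping coordinates `i` and `j`. -/
def swapT {n : ℕ} (i j : Fin n) (t : Fin n → Bool) : Fin n → Bool :=
  t ∘ Equiv.swap i j

/-- A singular cube is degenerate iff it does not depend on some coordinate,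
equivalently some pair of opposite faces `f_i^- σ = f_i^+ σ` agree. -/
def IsDegenerate {V : Type*} {m : ℕ} (τ : (Fin m → Bool) → V) : Prop :=
  ∃ i : Fin m, ∀ t, τ t = τ (reflT i t)

/-- The composite of adjacent transpositions `T_{i,i+1} ∘ T_{i+1,i+2} ∘ ⋯ ∘ T_{j-2,j-1}`
(0-based indices) on the discrete `n`-cube. -/
def adjSwapChain (n : ℕ) (i j : ℕ) : (Fin n → Bool) → (Fin n → Bool) :=
  ((List.range (j - i - 1)).map fun k =>
    if h : i + k + 1 < n then
      swapT (⟨i + k, by omega⟩ : Fin n) ⟨i + k + 1, h⟩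
    else id).foldr (· ∘ ·) id

lemma foldr_comp' {α : Type*} (l : List (α → α)) (g : α → α) :
    l.foldr (· ∘ ·) g = l.foldr (· ∘ ·) id ∘ g := by
  induction l with
  | nil => rfl
  | cons a l ih => simp [List.foldr_cons, ih]; rfl

lemma insertNth_apply {α : Type*} {N : ℕ} (p : Fin (N + 1)) (b : α) (t : Fin N → α)
    (m : Fin (N + 1)) :
    Fin.insertNth (α := fun _ => α) p b t m =
      if h : (m : ℕ) = (p : ℕ) then b
      else if h2 : (m : ℕ) < (p : ℕ) then t ⟨m, by have := p.isLt; omega⟩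
      else t ⟨(m : ℕ) - 1, by have := m.isLt; omega⟩ := by
  rcases eq_or_ne m p with rfl | h
  · simp
  · obtain ⟨k, rfl⟩ := Fin.exists_succAbove_eq h
    rw [Fin.insertNth_apply_succAbove]
    rcases lt_or_ge k.castSucc p with hk | hk
    · have hv : ((p.succAbove k : Fin (N+1)) : ℕ) = (k : ℕ) := by
        rw [Fin.succAbove_of_castSucc_lt _ _ hk]; rfl
      have hlt : (k : ℕ) < (p : ℕ) := hk
      rw [dif_neg (by omega), dif_pos (by omega : ((p.succAbove k : Fin (N+1)) : ℕ) < (p:ℕ))]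
      congr 1
      exact Fin.ext (by simp [hv])
    · have hv : ((p.succAbove k : Fin (N+1)) : ℕ) = (k : ℕ) + 1 := by
        rw [Fin.succAbove_of_le_castSucc _ _ hk]; rfl
      have hle : (p : ℕ) ≤ (k : ℕ) := hk
      rw [dif_neg (by omega), dif_neg (by omega)]
      congr 1
      exact Fin.ext (by simp [hv])

lemma adjSwapChain_succ (N i j : ℕ) (hij : i < j) :
    adjSwapChain N i (j + 1) =
      adjSwapChain N i j ∘
        (if h : j < N then swapT (⟨j - 1, by omega⟩ : Fin N) ⟨j, h⟩ else id) := by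
  unfold adjSwapChain
  rw [show j + 1 - i - 1 = (j - i - 1) + 1 by omega, List.range_succ, List.map_append,
    List.foldr_append]
  simp only [List.map_cons, List.map_nil, List.foldr_cons, List.foldr_nil]
  rw [foldr_comp']
  have key : (if h : i + (j - i - 1) + 1 < N then
        swapT (⟨i + (j - i - 1), by omega⟩ : Fin N) ⟨i + (j - i - 1) + 1, h⟩ else id) =
      (if h : j < N then swapT (⟨j - 1, by omega⟩ : Fin N) ⟨j, h⟩ else id) := by
    rcases Nat.lt_or_ge j N with h | h
    · rw [dif_pos (by omega : i + (j - i - 1) + 1 < N), dif_pos h]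
      have e1 : (⟨i + (j - i - 1), by omega⟩ : Fin N) = ⟨j - 1, by omega⟩ :=
        Fin.ext (show i + (j - i - 1) = j - 1 by omega)
      have e2 : (⟨i + (j - i - 1) + 1, by omega⟩ : Fin N) = ⟨j, h⟩ :=
        Fin.ext (show i + (j - i - 1) + 1 = j by omega)
      rw [e1, e2]
    · rw [dif_neg (by omega), dif_neg (by omega)]
  simp only [Function.comp_id, key]

lemma adjSwapChain_apply {N : ℕ} (i j : ℕ) :
    ∀ (t : Fin N → Bool) (k : Fin N) (hij : i < j) (hj : j ≤ N),
    adjSwapChain N i j t k =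
      if (k : ℕ) < i ∨ j ≤ (k : ℕ) then t k
      else if (k : ℕ) = i then t ⟨j - 1, by omega⟩
      else t ⟨(k : ℕ) - 1, by have := k.isLt; omega⟩ := by
  induction j with
  | zero => exact fun t k hij hj => absurd hij (by omega)
  | succ j ih =>
    intro t k hij hj
    rcases Nat.lt_or_ge i j with h | h
    · rw [adjSwapChain_succ N i j h, dif_pos (by omega : j < N)]
      simp only [Function.comp_apply]
      rw [ih _ k h (by omega)]
      rcases Nat.lt_trichotomy (k : ℕ) i with hk | hk | hk
      · have h1 : ((k : ℕ) < i ∨ j ≤ (k : ℕ)) := Or.inl hk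
        have h2 : ((k : ℕ) < i ∨ j + 1 ≤ (k : ℕ)) := Or.inl hk
        rw [if_pos h1, if_pos h2]
        simp only [swapT, Function.comp_apply]
        rw [Equiv.swap_apply_of_ne_of_ne
          (Fin.ne_of_val_ne (show (k : ℕ) ≠ j - 1 by omega))
          (Fin.ne_of_val_ne (show (k : ℕ) ≠ j by omega))]
      · have h1 : ¬((k : ℕ) < i ∨ j ≤ (k : ℕ)) := by omega
        have h2 : ¬((k : ℕ) < i ∨ j + 1 ≤ (k : ℕ)) := by omega
        rw [if_neg h1, if_pos hk, if_neg h2, if_pos hk]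
        simp only [swapT, Function.comp_apply, Equiv.swap_apply_left]
        exact congrArg t (Fin.ext (show (j : ℕ) = j + 1 - 1 by omega))
      · rcases Nat.lt_trichotomy (k : ℕ) j with hkj | hkj | hkj
        · have h1 : ¬((k : ℕ) < i ∨ j ≤ (k : ℕ)) := by omega
          have h2 : ¬((k : ℕ) < i ∨ j + 1 ≤ (k : ℕ)) := by omega
          have h3 : ¬((k : ℕ) = i) := by omega
          rw [if_neg h1, if_neg h3, if_neg h2, if_neg h3]
          simp only [swapT, Function.comp_apply]
          rw [Equiv.swap_apply_of_ne_of_ne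
            (Fin.ne_of_val_ne (show (k : ℕ) - 1 ≠ j - 1 by omega))
            (Fin.ne_of_val_ne (show (k : ℕ) - 1 ≠ j by omega))]
        · have h1 : ((k : ℕ) < i ∨ j ≤ (k : ℕ)) := Or.inr (by omega)
          have h2 : ¬((k : ℕ) < i ∨ j + 1 ≤ (k : ℕ)) := by omega
          have h3 : ¬((k : ℕ) = i) := by omega
          rw [if_pos h1, if_neg h2, if_neg h3]
          simp only [swapT, Function.comp_apply]
          have hkk : k = (⟨j, by omega⟩ : Fin N) := Fin.ext hkj
          rw [hkk, Equiv.swap_apply_right]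
        · have h1 : ((k : ℕ) < i ∨ j ≤ (k : ℕ)) := Or.inr (by omega)
          have h2 : ((k : ℕ) < i ∨ j + 1 ≤ (k : ℕ)) := Or.inr (by omega)
          rw [if_pos h1, if_pos h2]
          simp only [swapT, Function.comp_apply]
          rw [Equiv.swap_apply_of_ne_of_ne
            (Fin.ne_of_val_ne (show (k : ℕ) ≠ j - 1 by omega))
            (Fin.ne_of_val_ne (show (k : ℕ) ≠ j by omega))]
    · have hji : j = i := by omega
      subst hji
      unfold adjSwapChain
      rw [show j + 1 - j - 1 = 0 by omega]
      simp only [List.range_zero, List.map_nil, List.foldr_nil, id_eq]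
      rcases Nat.lt_trichotomy (k : ℕ) j with hk | hk | hk
      · rw [if_pos (Or.inl hk)]
      · rw [if_neg (show ¬((k : ℕ) < j ∨ j + 1 ≤ (k : ℕ)) by omega), if_pos hk]
        exact congrArg t (Fin.ext (show (k : ℕ) = j + 1 - 1 by omega))
      · rw [if_pos (Or.inr (by omega))]

set_option maxHeartbeats 1000000 in
/-- if the adjacent faces `f_i^a σ` and `f_j^{-a} σ` (`i < j`, opposite
signs) are injective with the same rigid image, `f_i^a f_j^a σ = f_i^{-a} f_j^{-a} σ`,
and `σ ∘ T_i = σ ∘ T_i ∘ T_{i,j}`, then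
`f_i^a σ = (f_j^{-a} σ) ∘ T_i ∘ T_{i,i+1} ∘ T_{i+1,i+2} ∘ ⋯ ∘ T_{j-2,j-1}`. -/
theorem adjacent_faces_opposite_sign_relation {V : Type*} (G : SimpleGraph V) {n : ℕ}
    (σ : (Fin (n + 2) → Bool) → V) (hσ : IsGraphMap (Cube (n + 2)) G σ)
    (i j : Fin (n + 2)) (hij : i < j) (a : Bool)
    (hiinj : Function.Injective (face i a σ)) (hjinj : Function.Injective (face j (!a) σ))
    (hrange : Set.range (face i a σ) = Set.range (face j (!a) σ))
    (hrigid : ∀ s t, G.Adj (face j (!a) σ s) (face j (!a) σ t) → (Cube (n + 1)).Adj s t)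
    (hcodim : face (⟨i, by omega⟩ : Fin (n + 1)) a (face j a σ) =
      face (⟨i, by omega⟩ : Fin (n + 1)) (!a) (face j (!a) σ))
    (hswap : (fun t => σ (reflT i t)) = fun t => σ (reflT i (swapT i j t))) :
    face i a σ = (face j (!a) σ) ∘
      (reflT (⟨i, by omega⟩ : Fin (n + 1))) ∘
      adjSwapChain (n + 1) i j := by
  have hij' : (i : ℕ) < (j : ℕ) := hij
  have hjn : (j : ℕ) < n + 2 := j.isLt
  have hne : i ≠ j := Fin.ne_of_val_ne (by omega)
  have key : ∀ u : Fin (n + 2) → Bool,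
      σ u = σ (fun m => if m = i then !(u j) else if m = j then !(u i) else u m) := by
    intro u
    have h1 := congrFun hswap (reflT i u)
    have h2 : reflT i (reflT i u) = u := by
      funext m
      rcases eq_or_ne m i with rfl | hm
      · simp [reflT]
      · simp [reflT, Function.update_apply, hm]
    have h3 : reflT i (swapT i j (reflT i u)) =
        fun m => if m = i then !(u j) else if m = j then !(u i) else u m := by
      funext m
      rcases eq_or_ne m i with rfl | hm
      · simp [reflT, swapT, Function.update_apply, Equiv.swap_apply_left, hne.symm]
      · rcases eq_or_ne m j with rfl | hm2
        · simp [reflT, swapT, Function.update_apply, Equiv.swap_apply_right, hm, hne.symm]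
        · simp [reflT, swapT, Function.update_apply, hm, hm2,
            Equiv.swap_apply_of_ne_of_ne hm hm2]
    rw [h2, h3] at h1
    exact h1
  funext t
  simp only [Function.comp_apply, face]
  rw [key (i.insertNth a t)]
  congr 1
  funext m
  beta_reduce
  let i' : Fin (n + 1) := (⟨i, by omega⟩ : Fin (n + 1))
  let c := adjSwapChain (n + 1) (i : ℕ) (j : ℕ) t
  have hcc : ∀ k : Fin (n + 1), c k =
      if (k : ℕ) < (i : ℕ) ∨ (j : ℕ) ≤ (k : ℕ) then t k
      else if (k : ℕ) = (i : ℕ) then t ⟨(j : ℕ) - 1, by omega⟩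
      else t ⟨(k : ℕ) - 1, by have := k.isLt; omega⟩ :=
    fun k => adjSwapChain_apply (i : ℕ) (j : ℕ) t k hij' (by omega)
  have hs : ∀ k : Fin (n + 1), reflT i' c k =
      if (k : ℕ) = (i : ℕ) then !(t ⟨(j : ℕ) - 1, by omega⟩)
      else c k := by
    intro k
    rcases eq_or_ne k i' with rfl | hk
    · rw [if_pos rfl]
      have hr : reflT i' c i' = !(c i') := by simp [reflT]
      rw [hr, hcc i']
      rw [if_neg (show ¬((i : ℕ) < (i : ℕ) ∨ (j : ℕ) ≤ (i : ℕ)) by omega),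
        if_pos (show (i : ℕ) = (i : ℕ) from rfl)]
    · have hkv : (k : ℕ) ≠ (i : ℕ) := fun h => hk (Fin.ext h)
      rw [if_neg hkv]
      simp [reflT, Function.update_apply, hk]
  rw [insertNth_apply j (!a) _ m, insertNth_apply i a t j, insertNth_apply i a t i]
  rw [dif_neg (show ¬((j : ℕ) = (i : ℕ)) by omega), dif_neg (show ¬((j : ℕ) < (i : ℕ)) by omega),
    dif_pos (show (i : ℕ) = (i : ℕ) from rfl)]
  rcases eq_or_ne m i with rfl | hmi
  · rw [if_pos rfl, dif_neg (show ¬((m : ℕ) = (j : ℕ)) by omega),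
      dif_pos (show (m : ℕ) < (j : ℕ) from hij')]
    rw [hs ⟨(m : ℕ), by have := m.isLt; omega⟩, if_pos (show ((m : ℕ) : ℕ) = (m : ℕ) from rfl)]
  · rw [if_neg hmi]
    have hmiv : (m : ℕ) ≠ (i : ℕ) := fun h => hmi (Fin.ext h)
    rcases eq_or_ne m j with rfl | hmj
    · rw [if_pos rfl, dif_pos (show (m : ℕ) = (m : ℕ) from rfl)]
    · have hmjv : (m : ℕ) ≠ (j : ℕ) := fun h => hmj (Fin.ext h)
      rw [if_neg hmj, dif_neg hmjv]
      rw [insertNth_apply i a t m, dif_neg hmiv]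
      rcases Nat.lt_or_ge (m : ℕ) (j : ℕ) with hmlt | hmge
      · rw [dif_pos hmlt, hs ⟨(m : ℕ), by omega⟩, if_neg (show ¬(((m : ℕ)) = (i : ℕ)) from hmiv),
          hcc ⟨(m : ℕ), by omega⟩]
        rcases Nat.lt_or_ge (m : ℕ) (i : ℕ) with hlt | hge
        · rw [dif_pos hlt, if_pos (Or.inl hlt)]
        · rw [dif_neg (show ¬((m : ℕ) < (i : ℕ)) by omega),
            if_neg (show ¬((m : ℕ) < (i : ℕ) ∨ (j : ℕ) ≤ (m : ℕ)) by omega),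
            if_neg hmiv]
      · rw [dif_neg (show ¬((m : ℕ) < (j : ℕ)) by omega),
          hs ⟨(m : ℕ) - 1, by have := m.isLt; omega⟩,
          if_neg (show ¬((m : ℕ) - 1 = (i : ℕ)) by omega),
          hcc ⟨(m : ℕ) - 1, by have := m.isLt; omega⟩,
          if_pos (Or.inr (show (j : ℕ) ≤ (m : ℕ) - 1 by omega)),
          dif_neg (show ¬((m : ℕ) < (i : ℕ)) by omega)]
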